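/- Knabe bound for star graphs: Let H_n = Σ_{i=1}^{n-1} h_{i,n} be a sum of orthogonal projectors acting on a finite-dimensional Hilbert space (a frustration-free star-graph Hamiltonian with center n and leaves 1,…,n−1), and suppose that for every (m−1)-element subset S of {1,…,n−1} the operator (Σ_{i∈S} h_{i,n})² ≥ Δ_m · Σ_{i∈S} h_{i,n} for some real Δ_m and some fixed m with 3 ≤ m ≤ n. Then H_n² ≥ [((n−2)/(m−2))(Δ_m − (n−m)/(n−2))] · H_n, hence the spectral gap of H_n is at least ((n−2)/(m−2))(Δ_m − (n−m)/(n−2)). -/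

import Mathlib

open Finset

lemma countSub {α : Type*} [DecidableEq α] (u t : Finset α) (ht : t ⊆ u) (k : ℕ)
    (hk : t.card ≤ k) :
    ((u.powersetCard k).filter (fun S => t ⊆ S)).card
      = (u.card - t.card).choose (k - t.card) := by
  rw [← Finset.card_sdiff_of_subset ht, ← Finset.card_powersetCard (k - t.card) (u \ t)]
  apply Finset.card_bij' (fun S _ => S \ t) (fun A _ => A ∪ t)
  · intro S hS
    simp only [Finset.mem_filter, Finset.mem_powersetCard] at hS
    obtain ⟨⟨hSu, hScard⟩, htS⟩ := hS
    simp only [Finset.mem_powersetCard]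
    constructor
    · exact Finset.sdiff_subset_sdiff hSu (le_refl t)
    · rw [Finset.card_sdiff_of_subset htS, hScard]
  · intro A hA
    simp only [Finset.mem_powersetCard] at hA
    obtain ⟨hAsub, hAcard⟩ := hA
    have hdisj : Disjoint A t := Finset.disjoint_of_subset_left hAsub (Finset.sdiff_disjoint)
    simp only [Finset.mem_filter, Finset.mem_powersetCard]
    refine ⟨⟨?_, ?_⟩, Finset.subset_union_right⟩
    · exact Finset.union_subset (hAsub.trans (Finset.sdiff_subset)) ht
    · rw [Finset.card_union_of_disjoint hdisj, hAcard]
      omega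
  · intro S hS
    simp only [Finset.mem_filter] at hS
    exact Finset.sdiff_union_of_subset hS.2
  · intro A hA
    simp only [Finset.mem_powersetCard] at hA
    have hdisj : Disjoint A t := Finset.disjoint_of_subset_left hA.1 (Finset.sdiff_disjoint)
    rw [Finset.union_sdiff_distrib, Finset.sdiff_self, Finset.union_empty,
      Finset.sdiff_eq_self_of_disjoint hdisj]

lemma swapSingle {α M : Type*} [DecidableEq α] [AddCommMonoid M] (u : Finset α) (k : ℕ)
    (f : α → M) :
    ∑ S ∈ u.powersetCard k, ∑ i ∈ S, f i
      = ∑ i ∈ u, ((u.powersetCard k).filter (fun S => i ∈ S)).card • f i := by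
  have h1 : ∀ S ∈ u.powersetCard k, ∑ i ∈ S, f i = ∑ i ∈ u, if i ∈ S then f i else 0 := by
    intro S hS
    rw [Finset.sum_ite_mem, Finset.inter_eq_right.2 (Finset.mem_powersetCard.1 hS).1]
  rw [Finset.sum_congr rfl h1, Finset.sum_comm]
  refine Finset.sum_congr rfl fun i _ => ?_
  rw [← Finset.sum_filter, Finset.sum_const]

lemma swapPair {α M : Type*} [DecidableEq α] [AddCommMonoid M] (u : Finset α) (k : ℕ)
    (g : α → α → M) :
    ∑ S ∈ u.powersetCard k, ∑ i ∈ S, ∑ j ∈ S, g i j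
      = ∑ i ∈ u, ∑ j ∈ u,
          ((u.powersetCard k).filter (fun S => i ∈ S ∧ j ∈ S)).card • g i j := by
  have h1 : ∀ S ∈ u.powersetCard k, ∑ i ∈ S, ∑ j ∈ S, g i j
      = ∑ i ∈ u, ∑ j ∈ u, if i ∈ S ∧ j ∈ S then g i j else 0 := by
    intro S hS
    have hsub := (Finset.mem_powersetCard.1 hS).1
    calc ∑ i ∈ S, ∑ j ∈ S, g i j
        = ∑ i ∈ S, ∑ j ∈ u, if j ∈ S then g i j else 0 := by
          refine Finset.sum_congr rfl fun i _ => ?_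
          rw [Finset.sum_ite_mem, Finset.inter_eq_right.2 hsub]
      _ = ∑ i ∈ u, if i ∈ S then (∑ j ∈ u, if j ∈ S then g i j else 0) else 0 := by
          rw [Finset.sum_ite_mem, Finset.inter_eq_right.2 hsub]
      _ = ∑ i ∈ u, ∑ j ∈ u, if i ∈ S ∧ j ∈ S then g i j else 0 := by
          refine Finset.sum_congr rfl fun i _ => ?_
          by_cases hi : i ∈ S <;> simp [hi]
  rw [Finset.sum_congr rfl h1, Finset.sum_comm]
  refine Finset.sum_congr rfl fun i _ => ?_
  rw [Finset.sum_comm]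
  refine Finset.sum_congr rfl fun j _ => ?_
  rw [← Finset.sum_filter, Finset.sum_const]

open ComplexOrder in
lemma psdSmul {N : ℕ} {M : Matrix (Fin N) (Fin N) ℂ} (hM : M.PosSemidef) {r : ℝ}
    (hr : 0 ≤ r) : ((r : ℂ) • M).PosSemidef := by
  refine Matrix.PosSemidef.of_dotProduct_mulVec_nonneg ?_ ?_
  · unfold Matrix.IsHermitian
    rw [Matrix.conjTranspose_smul, hM.1, Complex.star_def, Complex.conj_ofReal]
  · intro x
    rw [Matrix.smul_mulVec, dotProduct_smul, smul_eq_mul]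
    exact mul_nonneg (by exact_mod_cast Complex.zero_le_real.2 hr) (hM.dotProduct_mulVec_nonneg x)

open ComplexOrder in
lemma psdSum {N : ℕ} {ι : Type*} (s : Finset ι) (f : ι → Matrix (Fin N) (Fin N) ℂ)
    (hf : ∀ i ∈ s, (f i).PosSemidef) : (∑ i ∈ s, f i).PosSemidef :=
  Finset.sum_induction f _ (fun _ _ ha hb => ha.add hb) Matrix.PosSemidef.zero hf

open ComplexOrder
open Matrix in
/-- Knabe bound for star graphs: if `H = ∑_{i=1}^{n-1} h_i` is a sum of projectors
(a frustration-free star-graph Hamiltonian, with `h i` the term on the edge from leaf `i`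
to the center), and for every `(m-1)`-element subset `S` of the leaves
`(∑_{i ∈ S} h_i)² ≥ Δm · ∑_{i ∈ S} h_i`, then
`H² ≥ ((n−2)/(m−2))(Δm − (n−m)/(n−2)) · H`, hence every nonzero eigenvalue of `H`
(in particular the spectral gap) is at least `((n−2)/(m−2))(Δm − (n−m)/(n−2))`. -/
theorem stmt3 {N : ℕ} (n m : ℕ) (hm : 3 ≤ m) (hmn : m ≤ n)
    (h : Fin (n - 1) → Matrix (Fin N) (Fin N) ℂ)
    (hproj : ∀ i, (h i).IsHermitian ∧ h i * h i = h i)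
    (Δm : ℝ)
    (hsub : ∀ S ∈ Finset.powersetCard (m - 1) (Finset.univ : Finset (Fin (n - 1))),
      ((∑ i ∈ S, h i) * (∑ i ∈ S, h i) - ((Δm : ℂ)) • (∑ i ∈ S, h i)).PosSemidef)
    (hHerm : (∑ i, h i).IsHermitian) :
    ((∑ i, h i) * (∑ i, h i)
      - (((((n : ℝ) - 2) / ((m : ℝ) - 2) * (Δm - ((n : ℝ) - (m : ℝ)) / ((n : ℝ) - 2)) : ℝ) : ℂ))
          • (∑ i, h i)).PosSemidef
    ∧ ∀ j, hHerm.eigenvalues j ≠ 0 →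
        ((n : ℝ) - 2) / ((m : ℝ) - 2) * (Δm - ((n : ℝ) - (m : ℝ)) / ((n : ℝ) - 2))
          ≤ hHerm.eigenvalues j := by
  classical
  have hn : 3 ≤ n := le_trans hm hmn
  set cst : ℝ := ((n : ℝ) - 2) / ((m : ℝ) - 2) * (Δm - ((n : ℝ) - (m : ℝ)) / ((n : ℝ) - 2))
    with hcst
  set H : Matrix (Fin N) (Fin N) ℂ := ∑ i, h i with hHdef
  set a : ℕ := (n - 2).choose (m - 2) with ha
  set b : ℕ := (n - 3).choose (m - 3) with hb
  set k : ℕ := m - 1 with hk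
  have hucard : (Finset.univ : Finset (Fin (n - 1))).card = n - 1 := by
    simp
  -- counting lemmas
  have hcount1 : ∀ i : Fin (n - 1),
      ((Finset.powersetCard k Finset.univ).filter (fun S => i ∈ S)).card = a := by
    intro i
    have := countSub (Finset.univ : Finset (Fin (n - 1))) {i} (by simp) k (by simp; omega)
    simp only [Finset.singleton_subset_iff, Finset.card_singleton, hucard] at this
    rw [this, ha]
    congr 1 <;> omega
  have hcount2 : ∀ i j : Fin (n - 1), i ≠ j →
      ((Finset.powersetCard k Finset.univ).filter (fun S => i ∈ S ∧ j ∈ S)).card = b := by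
    intro i j hij
    have hc2 : ({i, j} : Finset (Fin (n - 1))).card = 2 := by
      rw [Finset.card_insert_of_notMem (by simpa using hij), Finset.card_singleton]
    have := countSub (Finset.univ : Finset (Fin (n - 1))) {i, j} (by simp) k
      (by rw [hc2]; omega)
    simp only [Finset.insert_subset_iff, Finset.singleton_subset_iff, hc2, hucard] at this
    rw [this, hb]
    congr 1 <;> omega
  -- the two sum identities
  have hB : ∑ S ∈ Finset.powersetCard k (Finset.univ : Finset (Fin (n - 1))), ∑ i ∈ S, h i
      = a • H := by
    rw [swapSingle]
    rw [Finset.sum_congr rfl (fun i _ => by rw [hcount1 i]), ← Finset.smul_sum]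
  have hA : ∑ S ∈ Finset.powersetCard k (Finset.univ : Finset (Fin (n - 1))),
        (∑ i ∈ S, h i) * (∑ i ∈ S, h i)
      = b • (H * H) + (a • H - b • H) := by
    have expand : ∀ S : Finset (Fin (n - 1)),
        (∑ i ∈ S, h i) * (∑ i ∈ S, h i) = ∑ i ∈ S, ∑ j ∈ S, h i * h j := fun S =>
      Finset.sum_mul_sum S S h h
    rw [Finset.sum_congr rfl fun S _ => expand S, swapPair]
    have step : ∀ i j : Fin (n - 1),
        ((Finset.powersetCard k (Finset.univ : Finset (Fin (n - 1)))).filter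
            (fun S => i ∈ S ∧ j ∈ S)).card • (h i * h j)
          = b • (h i * h j) + (if i = j then a • h i - b • h i else 0) := by
      intro i j
      by_cases hij : i = j
      · subst hij
        have : ((Finset.powersetCard k (Finset.univ : Finset (Fin (n - 1)))).filter
            (fun S => i ∈ S ∧ i ∈ S)).card = a := by
          rw [← hcount1 i]; congr 1; simp
        rw [this, (hproj i).2, if_pos rfl]
        abel
      · rw [hcount2 i j hij, if_neg hij, add_zero]
    rw [Finset.sum_congr rfl fun i _ => Finset.sum_congr rfl fun j _ => step i j]
    rw [Finset.sum_congr rfl fun i (_ : i ∈ Finset.univ) => Finset.sum_add_distrib]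
    rw [Finset.sum_add_distrib]
    congr 1
    · simp only [← Finset.smul_sum]
      congr 1
      rw [← Finset.sum_mul_sum]
    · rw [Finset.sum_congr rfl fun i (_ : i ∈ Finset.univ) =>
        Finset.sum_ite_eq (Finset.univ : Finset (Fin (n - 1))) i
          (fun _ => a • h i - b • h i)]
      simp only [Finset.mem_univ, if_true]
      rw [Finset.sum_sub_distrib, ← Finset.smul_sum, ← Finset.smul_sum]
  -- positivity of the summed operator
  have hT : (∑ S ∈ Finset.powersetCard k (Finset.univ : Finset (Fin (n - 1))),
      ((∑ i ∈ S, h i) * (∑ i ∈ S, h i) - (Δm : ℂ) • (∑ i ∈ S, h i))).PosSemidef :=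
    psdSum _ _ hsub
  have hTval : ∑ S ∈ Finset.powersetCard k (Finset.univ : Finset (Fin (n - 1))),
        ((∑ i ∈ S, h i) * (∑ i ∈ S, h i) - (Δm : ℂ) • (∑ i ∈ S, h i))
      = b • (H * H) + (a • H - b • H) - (Δm : ℂ) • (a • H) := by
    rw [Finset.sum_sub_distrib, hA, ← Finset.smul_sum, hB]
  -- arithmetic facts
  have hbpos : 0 < b := Nat.choose_pos (by omega)
  have hnat : (n - 2) * b = a * (m - 2) := by
    have h1 := Nat.add_one_mul_choose_eq (n - 3) (m - 3)
    have h2 : n - 3 + 1 = n - 2 := by omega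
    have h3 : m - 3 + 1 = m - 2 := by omega
    rw [h2, h3] at h1
    rw [ha, hb, h1]
  have hcn : ((n - 2 : ℕ) : ℝ) = (n : ℝ) - 2 := by
    rw [Nat.cast_sub (by omega)]; norm_num
  have hcm : ((m - 2 : ℕ) : ℝ) = (m : ℝ) - 2 := by
    rw [Nat.cast_sub (by omega)]; norm_num
  have hab : ((n : ℝ) - 2) * (b : ℝ) = (a : ℝ) * ((m : ℝ) - 2) := by
    rw [← hcn, ← hcm]
    exact_mod_cast hnat
  have hm2 : ((m : ℝ) - 2) ≠ 0 := by
    have : (3 : ℝ) ≤ (m : ℝ) := by exact_mod_cast hm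
    linarith
  have hn2 : ((n : ℝ) - 2) ≠ 0 := by
    have : (3 : ℝ) ≤ (n : ℝ) := by exact_mod_cast hn
    linarith
  have hbne : ((b : ℝ)) ≠ 0 := by positivity
  have hkey : (b : ℝ) * cst = Δm * a - a + b := by
    rw [hcst]
    field_simp
    linear_combination (Δm - 1) * hab
  -- the scaled identity
  have hkeyC : ((b : ℝ) : ℂ) * ((cst : ℝ) : ℂ) = (Δm : ℂ) * (a : ℂ) - (a : ℂ) + (b : ℂ) := by
    have := congrArg (fun x : ℝ => (x : ℂ)) hkey
    push_cast at this ⊢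
    exact this
  have heq : ((b : ℝ) : ℂ) • (H * H - ((cst : ℝ) : ℂ) • H)
      = b • (H * H) + (a • H - b • H) - (Δm : ℂ) • (a • H) := by
    simp only [← Nat.cast_smul_eq_nsmul ℂ]
    rw [smul_sub, smul_smul, hkeyC]
    module
  have hpsd1 : (H * H - ((cst : ℝ) : ℂ) • H).PosSemidef := by
    have h1 : (((b : ℝ) : ℂ) • (H * H - ((cst : ℝ) : ℂ) • H)).PosSemidef := by
      rw [heq, ← hTval]; exact hT
    have h2 := psdSmul h1 (r := (b : ℝ)⁻¹) (by positivity)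
    rwa [smul_smul, ← Complex.ofReal_mul, inv_mul_cancel₀ hbne, Complex.ofReal_one,
      one_smul] at h2
  refine ⟨hpsd1, ?_⟩
  -- eigenvalue bound
  intro j hj
  set lam : ℝ := hHerm.eigenvalues j with hlam
  -- H is positive semidefinite
  have hHpsd : H.PosSemidef := by
    apply psdSum
    intro i _
    have key : Matrix.conjTranspose (h i) * h i = h i := by
      rw [(hproj i).1]
      exact (hproj i).2
    rw [← key]
    exact Matrix.posSemidef_conjTranspose_mul_self _
  have hlamnn : 0 ≤ lam := hHpsd.eigenvalues_nonneg j
  have hlampos : 0 < lam := lt_of_le_of_ne hlamnn (Ne.symm hj)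
  -- eigenvector
  set v : Fin N → ℂ := ⇑(hHerm.eigenvectorBasis j) with hv
  have hvne : v ≠ 0 := by
    intro hc
    have hb0 := (hHerm.eigenvectorBasis).toBasis.ne_zero j
    apply hb0
    rw [OrthonormalBasis.coe_toBasis]
    have : (hHerm.eigenvectorBasis j : EuclideanSpace ℂ (Fin N)) = 0 := by
      ext i; exact congrFun hc i
    exact this
  have hmul : H *ᵥ v = (lam : ℂ) • v := by
    have := hHerm.mulVec_eigenvectorBasis j
    rw [hv, hlam]
    convert this using 1
    ext i; simp [Complex.real_smul]
  have hmul2 : (H * H) *ᵥ v = ((lam : ℂ) * (lam : ℂ)) • v := by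
    rw [← Matrix.mulVec_mulVec, hmul, Matrix.mulVec_smul, hmul, smul_smul]
  have hquad := hpsd1.dotProduct_mulVec_nonneg v
  rw [Matrix.sub_mulVec, Matrix.smul_mulVec, hmul, hmul2, smul_smul] at hquad
  rw [← sub_smul, dotProduct_smul, smul_eq_mul] at hquad
  -- compute star v ⬝ᵥ v
  set r : ℝ := ∑ i, Complex.normSq (v i) with hr
  have hdot : dotProduct (star v) v = (r : ℂ) := by
    rw [hr]
    push_cast
    unfold dotProduct
    refine Finset.sum_congr rfl fun i _ => ?_
    simp only [Pi.star_apply, Complex.star_def]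
    rw [← Complex.normSq_eq_conj_mul_self]
  have hrpos : 0 < r := by
    rcases Function.ne_iff.1 hvne with ⟨i, hi⟩
    have : 0 < Complex.normSq (v i) := Complex.normSq_pos.2 hi
    have hle : Complex.normSq (v i) ≤ r := by
      rw [hr]
      exact Finset.single_le_sum (fun i _ => Complex.normSq_nonneg _) (Finset.mem_univ i)
    linarith
  rw [hdot] at hquad
  rw [show ((lam : ℂ) * (lam : ℂ) - (cst : ℂ) * (lam : ℂ)) * (r : ℂ)
      = (((lam * lam - cst * lam) * r : ℝ) : ℂ) by push_cast; ring] at hquad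
  have hquadre : 0 ≤ (lam * lam - cst * lam) * r := Complex.zero_le_real.1 hquad
  have h5 : 0 ≤ lam * lam - cst * lam := by nlinarith [hquadre, hrpos]
  nlinarith [h5, hlampos]
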